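/- Any formal power series solution (a,b) ∈ ℝ[[t]]² of the system t·a' = P·a·b - a, t·b' = (P/2)(1-b²) - t·(PQ/2)(1-a²) - t·Q·b (where P, Q are expanded as formal power series of the analytic functions P(t) = √6√(2t²+2)/√(2t²+3), Q(t) = t/(t²+1)) with a(0) = 0, b(0) = 1 is uniquely determined by the coefficient a₀ = a'(0); moreover a is odd and b is even as a formal series. -/

import Mathlib

open PowerSeries

/-- The Taylor series at `0` of `P(t) = √6·√(2t²+2)/√(2t²+3)`. -/
noncomputable def Pseries : PowerSeries ℝ :=
  PowerSeries.mk fun n =>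
    iteratedDeriv n (fun t : ℝ => Real.sqrt 6 * Real.sqrt (2 * t ^ 2 + 2) / Real.sqrt (2 * t ^ 2 + 3)) 0 /
      n.factorial

/-- The Taylor series at `0` of `Q(t) = t/(t²+1)`. -/
noncomputable def Qseries : PowerSeries ℝ :=
  PowerSeries.mk fun n => iteratedDeriv n (fun t : ℝ => t / (t ^ 2 + 1)) 0 / n.factorial

/-- `(a,b)` is a formal power series solution of the invariant Spin(7) instanton system
`t·a' = P·a·b - a`, `t·b' = (P/2)(1-b²) - t·(PQ/2)(1-a²) - t·Q·b` with `a(0) = 0`, `b(0) = 1`. -/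
def IsFormalSpin7Sol (a b : PowerSeries ℝ) : Prop :=
  PowerSeries.X * a.derivativeFun = Pseries * a * b - a ∧
  PowerSeries.X * b.derivativeFun =
    PowerSeries.C (1 / 2) * Pseries * (1 - b ^ 2) -
      PowerSeries.X * (PowerSeries.C (1 / 2) * Pseries * Qseries) * (1 - a ^ 2) -
      PowerSeries.X * Qseries * b ∧
  PowerSeries.constantCoeff a = 0 ∧
  PowerSeries.constantCoeff b = 1

lemma aux_coeff_mul_top (f u : PowerSeries ℝ) (n : ℕ) (h : ∀ k < n, coeff k u = 0) :
    coeff n (f * u) = constantCoeff f * coeff n u := by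
  rw [coeff_mul, Finset.sum_eq_single (0, n)]
  · rw [coeff_zero_eq_constantCoeff]
  · rintro ⟨i, j⟩ hij hne
    rw [Finset.HasAntidiagonal.mem_antidiagonal] at hij
    have hij' : i ≠ 0 ∨ j ≠ n := by
      by_contra hc
      push_neg at hc
      exact hne (by simp [hc.1, hc.2])
    have hj : j < n := by omega
    rw [h j hj, mul_zero]
  · intro h0
    exact absurd (Finset.HasAntidiagonal.mem_antidiagonal.mpr (by simp)) h0

lemma aux_coeff_mul_low (f u : PowerSeries ℝ) (n m : ℕ) (hm : m < n)
    (h : ∀ k < n, coeff k u = 0) : coeff m (f * u) = 0 := by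
  rw [coeff_mul]
  apply Finset.sum_eq_zero
  rintro ⟨i, j⟩ hij
  rw [Finset.HasAntidiagonal.mem_antidiagonal] at hij
  rw [h j (by omega), mul_zero]

lemma aux_coeff_derivativeFun (f : PowerSeries ℝ) (n : ℕ) :
    coeff n f.derivativeFun = coeff (n + 1) f * (n + 1) :=
  coeff_derivative f n

lemma aux_derivFun_sub (f g : PowerSeries ℝ) :
    derivativeFun (f - g) = derivativeFun f - derivativeFun g := by
  ext n
  simp [aux_coeff_derivativeFun, sub_mul]



lemma aux_P_odd (n : ℕ) (hn : Odd n) : coeff n Pseries = 0 := by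
  set f : ℝ → ℝ := fun t => Real.sqrt 6 * Real.sqrt (2 * t ^ 2 + 2) / Real.sqrt (2 * t ^ 2 + 3) with hf
  have hfe : (fun x : ℝ => f (-x)) = f := by
    funext x
    simp [hf, neg_sq]
  have h := iteratedDeriv_comp_neg n f 0
  rw [hfe, neg_zero, smul_eq_mul, hn.neg_one_pow, neg_one_mul] at h
  have h0 : iteratedDeriv n f 0 = 0 := by linarith
  simp [Pseries, coeff_mk, ← hf, h0]

lemma aux_Q_even (n : ℕ) (hn : Even n) : coeff n Qseries = 0 := by
  set f : ℝ → ℝ := fun t => t / (t ^ 2 + 1) with hf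
  have hfe : (fun x : ℝ => f (-x)) = fun x => -(f x) := by
    funext x
    simp [hf, neg_sq, neg_div]
  have h := iteratedDeriv_comp_neg n f 0
  rw [hfe, iteratedDeriv_fun_neg, neg_zero, smul_eq_mul, hn.neg_one_pow, one_mul] at h
  have h0 : iteratedDeriv n f 0 = 0 := by linarith
  simp [Qseries, coeff_mk, ← hf, h0]

lemma aux_rescale_P : rescale (-1 : ℝ) Pseries = Pseries := by
  ext n
  rw [coeff_rescale]
  rcases Nat.even_or_odd n with he | ho
  · rw [he.neg_one_pow, one_mul]
  · rw [aux_P_odd n ho, mul_zero]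

lemma aux_rescale_Q : rescale (-1 : ℝ) Qseries = -Qseries := by
  ext n
  rw [coeff_rescale, map_neg]
  rcases Nat.even_or_odd n with he | ho
  · rw [aux_Q_even n he, mul_zero, neg_zero]
  · rw [ho.neg_one_pow, neg_one_mul]

lemma aux_P_zero : constantCoeff Pseries = 2 := by
  have h4 : Real.sqrt 4 = 2 := by
    rw [show (4 : ℝ) = 2 ^ 2 by norm_num, Real.sqrt_sq (by norm_num)]
  have h12 : Real.sqrt 6 * Real.sqrt 2 = 2 * Real.sqrt 3 := by
    rw [← Real.sqrt_mul (by norm_num), show (6 : ℝ) * 2 = 4 * 3 by norm_num,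
      Real.sqrt_mul (by norm_num), h4]
  have h3 : Real.sqrt 3 ≠ 0 := by positivity
  rw [← coeff_zero_eq_constantCoeff]
  simp only [Pseries, coeff_mk, iteratedDeriv_zero]
  norm_num
  rw [h12, mul_div_assoc, div_self h3, mul_one]

lemma aux_unique (a b a' b' : PowerSeries ℝ) (hs : IsFormalSpin7Sol a b)
    (hs' : IsFormalSpin7Sol a' b') (h1 : PowerSeries.coeff 1 a = PowerSeries.coeff 1 a') :
    a = a' ∧ b = b' := by
  have e1 : X * derivativeFun (a - a') =
      (Pseries * b) * (a - a') + (Pseries * a') * (b - b') - (a - a') := by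
    rw [aux_derivFun_sub]
    linear_combination hs.1 - hs'.1
  have e2 : X * derivativeFun (b - b') =
      -(PowerSeries.C (1/2) * Pseries * (b + b')) * (b - b')
      + X * ((PowerSeries.C (1/2) * Pseries * Qseries * (a + a')) * (a - a'))
      - X * (Qseries * (b - b')) := by
    rw [aux_derivFun_sub]
    linear_combination hs.2.1 - hs'.2.1
  have main : ∀ n : ℕ, coeff n (a - a') = 0 ∧ coeff n (b - b') = 0 := by
    intro n
    induction n using Nat.strong_induction_on with
    | _ n IH =>
      have hu : ∀ k < n, coeff k (a - a') = 0 := fun k hk => (IH k hk).1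
      have hv : ∀ k < n, coeff k (b - b') = 0 := fun k hk => (IH k hk).2
      constructor
      · obtain _ | _ | m := n
        · rw [coeff_zero_eq_constantCoeff, map_sub, hs.2.2.1, hs'.2.2.1, sub_zero]
        · rw [map_sub, h1, sub_self]
        · have hR : coeff (m + 2) ((Pseries * b) * (a - a') + (Pseries * a') * (b - b')
              - (a - a')) = 2 * coeff (m + 2) (a - a') - coeff (m + 2) (a - a') := by
            rw [map_sub, map_add, aux_coeff_mul_top _ _ _ hu, aux_coeff_mul_top _ _ _ hv,
              map_mul, map_mul, aux_P_zero, hs.2.2.2, hs'.2.2.1]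
            ring
          have hL := congrArg (coeff (m + 2)) e1
          rw [coeff_succ_X_mul, aux_coeff_derivativeFun, hR] at hL
          have hz : coeff (m + 2) (a - a') * ((m : ℝ) + 1) = 0 := by
            push_cast at hL ⊢
            linarith
          have hm : ((m : ℝ) + 1) ≠ 0 := by positivity
          exact (mul_eq_zero.mp hz).resolve_right hm
      · obtain _ | m := n
        · rw [coeff_zero_eq_constantCoeff, map_sub, hs.2.2.2, hs'.2.2.2, sub_self]
        · have hc : constantCoeff (-(PowerSeries.C (1/2) * Pseries * (b + b'))) = -2 := by
            rw [map_neg, map_mul, map_mul, map_add, aux_P_zero, hs.2.2.2, hs'.2.2.2,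
              constantCoeff_C]
            norm_num
          have hR : coeff (m + 1) (-(PowerSeries.C (1/2) * Pseries * (b + b')) * (b - b')
              + X * ((PowerSeries.C (1/2) * Pseries * Qseries * (a + a')) * (a - a'))
              - X * (Qseries * (b - b'))) = -2 * coeff (m + 1) (b - b') := by
            rw [map_sub, map_add, aux_coeff_mul_top _ _ _ hv, coeff_succ_X_mul,
              coeff_succ_X_mul, aux_coeff_mul_low _ _ _ _ (Nat.lt_succ_self m) hu,
              aux_coeff_mul_low _ _ _ _ (Nat.lt_succ_self m) hv, hc]
            ring
          have hL := congrArg (coeff (m + 1)) e2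
          rw [coeff_succ_X_mul, aux_coeff_derivativeFun, hR] at hL
          have hz : coeff (m + 1) (b - b') * ((m : ℝ) + 3) = 0 := by
            push_cast at hL ⊢
            linarith
          have hm : ((m : ℝ) + 3) ≠ 0 := by positivity
          exact (mul_eq_zero.mp hz).resolve_right hm
  constructor
  · ext n
    have := (main n).1
    rw [map_sub, sub_eq_zero] at this
    exact this
  · ext n
    have := (main n).2
    rw [map_sub, sub_eq_zero] at this
    exact this


lemma aux_derivFun_neg (f : PowerSeries ℝ) : derivativeFun (-f) = -derivativeFun f := by
  ext n
  simp [aux_coeff_derivativeFun]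

lemma aux_rescale_deriv (f : PowerSeries ℝ) :
    rescale (-1 : ℝ) (derivativeFun f) = -derivativeFun (rescale (-1 : ℝ) f) := by
  ext n
  rw [coeff_rescale, aux_coeff_derivativeFun, map_neg, aux_coeff_derivativeFun, coeff_rescale, pow_succ]
  ring

lemma aux_rescale_C (r : ℝ) : rescale (-1 : ℝ) (PowerSeries.C r) = PowerSeries.C r := by
  ext n
  rw [coeff_rescale]
  cases n with
  | zero => simp
  | succ m => simp [coeff_C]

lemma aux_parity (a b : PowerSeries ℝ) (hs : IsFormalSpin7Sol a b) :
    (∀ n : ℕ, Even n → PowerSeries.coeff n a = 0) ∧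
    (∀ n : ℕ, Odd n → PowerSeries.coeff n b = 0) := by
  set Ra := rescale (-1 : ℝ) a with hRa
  set Rb := rescale (-1 : ℝ) b with hRb
  have key1 : X * derivativeFun Ra = Pseries * Ra * Rb - Ra := by
    have h := congrArg (rescale (-1 : ℝ)) hs.1
    simp only [map_mul, map_sub] at h
    rw [rescale_neg_one_X, aux_rescale_P, aux_rescale_deriv] at h
    linear_combination h
  have key2 : X * derivativeFun Rb =
      PowerSeries.C (1 / 2) * Pseries * (1 - Rb ^ 2) -
        X * (PowerSeries.C (1 / 2) * Pseries * Qseries) * (1 - (-Ra) ^ 2) -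
        X * Qseries * Rb := by
    have h := congrArg (rescale (-1 : ℝ)) hs.2.1
    simp only [map_mul, map_sub, map_one, map_pow] at h
    rw [rescale_neg_one_X, aux_rescale_P, aux_rescale_Q, aux_rescale_C,
      aux_rescale_deriv] at h
    linear_combination h
  have hsol : IsFormalSpin7Sol (-Ra) Rb := by
    refine ⟨?_, key2, ?_, ?_⟩
    · rw [aux_derivFun_neg]
      linear_combination -key1
    · rw [← coeff_zero_eq_constantCoeff, map_neg, hRa, coeff_rescale, pow_zero, one_mul,
        coeff_zero_eq_constantCoeff, hs.2.2.1, neg_zero]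
    · rw [← coeff_zero_eq_constantCoeff, hRb, coeff_rescale, pow_zero, one_mul,
        coeff_zero_eq_constantCoeff, hs.2.2.2]
  have h1 : PowerSeries.coeff 1 a = PowerSeries.coeff 1 (-Ra) := by
    rw [map_neg, hRa, coeff_rescale, pow_one]
    ring
  obtain ⟨hae, hbe⟩ := aux_unique a b (-Ra) Rb hs hsol h1
  constructor
  · intro n hn
    have := congrArg (coeff n) hae
    rw [map_neg, hRa, coeff_rescale, hn.neg_one_pow, one_mul] at this
    linarith
  · intro n hn
    have := congrArg (coeff n) hbe
    rw [hRb, coeff_rescale, hn.neg_one_pow, neg_one_mul] at this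
    linarith

/-- A formal power series solution of the invariant Spin(7) instanton system with `a(0) = 0`,
`b(0) = 1` is uniquely determined by the coefficient `a₀ = a'(0)`; moreover `a` is odd and `b`
is even as a formal series. -/
theorem formal_spin7_solution_unique_and_parity :
    (∀ a b a' b' : PowerSeries ℝ, IsFormalSpin7Sol a b → IsFormalSpin7Sol a' b' →
      PowerSeries.coeff 1 a = PowerSeries.coeff 1 a' → a = a' ∧ b = b') ∧
    (∀ a b : PowerSeries ℝ, IsFormalSpin7Sol a b →
      (∀ n : ℕ, Even n → PowerSeries.coeff n a = 0) ∧
      (∀ n : ℕ, Odd n → PowerSeries.coeff n b = 0)) := by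
  exact ⟨fun a b a' b' hs hs' h1 => aux_unique a b a' b' hs hs' h1,
    fun a b hs => aux_parity a b hs⟩
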